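/- (Lemma C.2.) Fix an integer K ≥ 1, real numbers a₁, …, a_K > 0 and t ≠ 0, and on the probability simplex Δ = {b ∈ ℝ^K : b_k ≥ 0 for all k, ∑_k b_k = 1} define R(b) := (1/K)·∑_{k=1}^K a_k / √(t²·b_k + 1). Let A := max_k a_k, M_a := {m : a_m = A}, let b* be a minimizer of R over Δ, and let B denote the common value b*_m for m ∈ M_a (which is positive). Then for every k ∈ {1, …, K}: b*_k = 0 if and only if a_k ≤ A / (t²·B + 1)^{3/2}. -/

import Mathlib

open Filter

private lemma hasDerivAt_aux (t x : ℝ) (hx : 0 < t ^ 2 * x + 1) :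
    HasDerivAt (fun y => 1 / Real.sqrt (t ^ 2 * y + 1))
      (-(t ^ 2) / (2 * Real.sqrt (t ^ 2 * x + 1) * (t ^ 2 * x + 1))) x := by
  have h1 : HasDerivAt (fun y : ℝ => t ^ 2 * y + 1) (t ^ 2) x := by
    simpa using ((hasDerivAt_id x).const_mul (t ^ 2)).add_const 1
  have hs : Real.sqrt (t ^ 2 * x + 1) ≠ 0 := by positivity
  have h2 : HasDerivAt (fun y => Real.sqrt (t ^ 2 * y + 1))
      (1 / (2 * Real.sqrt (t ^ 2 * x + 1)) * t ^ 2) x :=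
    (Real.hasDerivAt_sqrt hx.ne').comp x h1
  have h4 : HasDerivAt (fun y => 1 / Real.sqrt (t ^ 2 * y + 1))
      (-(1 / (2 * Real.sqrt (t ^ 2 * x + 1)) * t ^ 2) / Real.sqrt (t ^ 2 * x + 1) ^ 2) x := by
    simpa [one_div, Pi.inv_def] using h2.inv hs
  convert h4 using 1
  rw [Real.sq_sqrt hx.le]
  field_simp

private lemma exchange {K : ℕ} (a : Fin K → ℝ) (t : ℝ)
    (bstar : Fin K → ℝ) (hb0 : ∀ j, 0 ≤ bstar j)
    (hb1 : ∑ j, bstar j = 1)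
    (hmin : ∀ b : Fin K → ℝ, (∀ j, 0 ≤ b j) → ∑ j, b j = 1 →
      ∑ j, a j / Real.sqrt (t ^ 2 * bstar j + 1) ≤ ∑ j, a j / Real.sqrt (t ^ 2 * b j + 1))
    (k m : Fin K) (hkm : k ≠ m) (hm : 0 < bstar m) (ht2 : 0 < t ^ 2) :
    a k / (Real.sqrt (t ^ 2 * bstar k + 1) * (t ^ 2 * bstar k + 1)) ≤
      a m / (Real.sqrt (t ^ 2 * bstar m + 1) * (t ^ 2 * bstar m + 1)) := by
  classical
  set c : Fin K → ℝ := fun j => (if j = k then 1 else 0) - (if j = m then 1 else 0) with hc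
  set G : ℝ → ℝ := fun ε => ∑ j, a j / Real.sqrt (t ^ 2 * (bstar j + ε * c j) + 1) with hG
  have hpos : ∀ j, (0:ℝ) < t ^ 2 * bstar j + 1 := fun j => by
    have := hb0 j; positivity
  -- feasibility and minimality
  have hfeas : ∀ ε ∈ Set.Ioc (0:ℝ) (bstar m), G 0 ≤ G ε := by
    intro ε hε
    have hnn : ∀ j, 0 ≤ bstar j + ε * c j := by
      intro j
      simp only [hc]
      by_cases h1 : j = k
      · subst h1; simp [hkm]
        nlinarith [hb0 j, hε.1]
      · by_cases h2 : j = m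
        · subst h2; simp [h1]; nlinarith [hε.2]
        · simp [h1, h2, hb0 j]
    have hsum : ∑ j, (bstar j + ε * c j) = 1 := by
      have : ∑ j, c j = 0 := by
        simp only [hc, Finset.sum_sub_distrib, Finset.sum_ite_eq', Finset.mem_univ, if_true]
        ring
      rw [Finset.sum_add_distrib, hb1, ← Finset.mul_sum, this]
      ring
    have := hmin _ hnn hsum
    simpa [hG] using this
  -- derivative of G at 0
  have hterm : ∀ j : Fin K, HasDerivAt
      (fun ε => a j / Real.sqrt (t ^ 2 * (bstar j + ε * c j) + 1))
      (a j * (-(t ^ 2) / (2 * (Real.sqrt (t ^ 2 * bstar j + 1) * (t ^ 2 * bstar j + 1))) * c j))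
      0 := by
    intro j
    have hin : HasDerivAt (fun ε : ℝ => bstar j + ε * c j) (c j) 0 := by
      simpa using ((hasDerivAt_id (0:ℝ)).mul_const (c j)).const_add (bstar j)
    have hg := hasDerivAt_aux t (bstar j + 0 * c j) (by simpa using hpos j)
    have hcomp := hg.comp 0 hin
    have hcomp' : HasDerivAt (fun ε : ℝ => 1 / Real.sqrt (t ^ 2 * (bstar j + ε * c j) + 1))
        (-(t ^ 2) / (2 * (Real.sqrt (t ^ 2 * bstar j + 1) * (t ^ 2 * bstar j + 1))) * c j) 0 := by
      simpa [Function.comp_def, mul_assoc] using hcomp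
    simpa [mul_one_div, mul_assoc, ← div_eq_mul_inv] using hcomp'.const_mul (a j)
  set D : ℝ := ∑ j, a j * (-(t ^ 2) / (2 * (Real.sqrt (t ^ 2 * bstar j + 1) * (t ^ 2 * bstar j + 1))) * c j) with hD
  have hGd : HasDerivAt G D 0 := HasDerivAt.fun_sum fun j _ => hterm j
  -- slope limit gives 0 ≤ D
  have htend : Filter.Tendsto (fun ε => (G ε - G 0) / ε) (nhdsWithin 0 (Set.Ioi 0)) (nhds D) := by
    have h1 := hasDerivAt_iff_tendsto_slope.mp hGd
    have h2 : (fun ε => (G ε - G 0) / ε) = slope G 0 := by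
      funext ε; simp [slope_def_field]
    rw [h2]
    exact h1.mono_left (nhdsWithin_mono _ (fun x hx => ne_of_gt hx))
  have hD0 : 0 ≤ D := by
    refine ge_of_tendsto htend ?_
    filter_upwards [Ioc_mem_nhdsGT_of_mem ⟨le_refl (0:ℝ), hm⟩] with ε hε
    exact div_nonneg (sub_nonneg.2 (hfeas ε hε)) hε.1.le
  -- compute D
  have hDval : D = a k * (-(t ^ 2) / (2 * (Real.sqrt (t ^ 2 * bstar k + 1) * (t ^ 2 * bstar k + 1))))
      - a m * (-(t ^ 2) / (2 * (Real.sqrt (t ^ 2 * bstar m + 1) * (t ^ 2 * bstar m + 1)))) := by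
    rw [hD]
    simp only [hc, mul_sub, mul_ite, mul_one, mul_zero, Finset.sum_sub_distrib,
      Finset.sum_ite_eq', Finset.mem_univ, if_true]
  -- conclude
  set sk : ℝ := Real.sqrt (t ^ 2 * bstar k + 1) * (t ^ 2 * bstar k + 1) with hsk
  set sm : ℝ := Real.sqrt (t ^ 2 * bstar m + 1) * (t ^ 2 * bstar m + 1) with hsm
  have hskpos : 0 < sk := by
    have h := hpos k; rw [hsk]; positivity
  have hsmpos : 0 < sm := by
    have h := hpos m; rw [hsm]; positivity
  rw [hDval] at hD0
  have e : a k * (-(t ^ 2) / (2 * sk)) - a m * (-(t ^ 2) / (2 * sm))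
      = (t ^ 2 / 2) * (a m / sm - a k / sk) := by
    field_simp
    ring
  rw [e] at hD0
  nlinarith [hD0, ht2]

private lemma rpow_32 {U : ℝ} (hU : 0 < U) : U ^ ((3:ℝ)/2) = Real.sqrt U * U := by
  rw [show ((3:ℝ)/2) = 1/2 + 1 by norm_num, Real.rpow_add hU, Real.rpow_one,
    Real.sqrt_eq_rpow]


/-- Lemma C.2.  Let `b*` minimize `R(b) = (1/K)·∑ₖ aₖ/√(t²bₖ+1)` over the
probability simplex, and let `B` be the common (positive, by Lemma C.1) value of `b*` on the
set of indices where `a` attains its maximum `A`.  Then `b*ₖ = 0 ↔ aₖ ≤ A/(t²B+1)^{3/2}`. -/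
theorem stmt_9 {K : ℕ} (hK : 0 < K) (a : Fin K → ℝ) (ha : ∀ k, 0 < a k)
    (t : ℝ) (ht : t ≠ 0)
    (R : (Fin K → ℝ) → ℝ)
    (hR : ∀ b, R b = (1 / K : ℝ) * ∑ k, a k / Real.sqrt (t ^ 2 * b k + 1))
    (A : ℝ) (hub : ∀ k, a k ≤ A) (hex : ∃ k, a k = A)
    (bstar : Fin K → ℝ)
    (hmem : (∀ k, 0 ≤ bstar k) ∧ ∑ k, bstar k = 1)
    (hmin : ∀ b : Fin K → ℝ, (∀ k, 0 ≤ b k) → (∑ k, b k = 1) → R bstar ≤ R b)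
    (B : ℝ) (hB : ∀ m, a m = A → bstar m = B) (hBpos : 0 < B) :
    ∀ k : Fin K, bstar k = 0 ↔ a k ≤ A / (t ^ 2 * B + 1) ^ ((3 : ℝ) / 2) := by
  obtain ⟨hb0, hb1⟩ := hmem
  have ht2 : 0 < t ^ 2 := by positivity
  have hKr : (0:ℝ) < 1 / K := by positivity
  have hmin' : ∀ b : Fin K → ℝ, (∀ j, 0 ≤ b j) → ∑ j, b j = 1 →
      ∑ j, a j / Real.sqrt (t ^ 2 * bstar j + 1) ≤ ∑ j, a j / Real.sqrt (t ^ 2 * b j + 1) := by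
    intro b h1 h2
    have h3 := hmin b h1 h2
    rw [hR bstar, hR b] at h3
    exact le_of_mul_le_mul_left h3 hKr
  obtain ⟨m0, hm0⟩ := hex
  have hBm0 : bstar m0 = B := hB m0 hm0
  have hUgt : 1 < t ^ 2 * B + 1 := by nlinarith
  have hUpos : (0:ℝ) < t ^ 2 * B + 1 := by linarith
  have hsU : 1 < Real.sqrt (t ^ 2 * B + 1) * (t ^ 2 * B + 1) := by
    nlinarith [Real.sq_sqrt hUpos.le, Real.sqrt_nonneg (t ^ 2 * B + 1)]
  have hApos : 0 < A := lt_of_lt_of_le (ha m0) (hub m0)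
  intro k
  rw [rpow_32 hUpos]
  constructor
  · intro hk0
    have hkA : a k ≠ A := by
      intro h
      have h2 := hB k h
      rw [hk0] at h2
      exact absurd h2.symm (ne_of_gt hBpos)
    have hkm : k ≠ m0 := fun h => hkA (h ▸ hm0)
    have hx := exchange a t bstar hb0 hb1 hmin' k m0 hkm (hBm0 ▸ hBpos) ht2
    rw [hk0, hBm0, hm0] at hx
    simpa using hx
  · intro hle
    by_contra hk0
    have hkpos : 0 < bstar k := lt_of_le_of_ne (hb0 k) (Ne.symm hk0)
    by_cases hkm : k = m0
    · have hkA : a k = A := hkm ▸ hm0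
      have hlt : A / (Real.sqrt (t ^ 2 * B + 1) * (t ^ 2 * B + 1)) < A :=
        div_lt_self hApos hsU
      rw [hkA] at hle
      linarith
    · have hx := exchange a t bstar hb0 hb1 hmin' m0 k (Ne.symm hkm) hkpos ht2
      rw [hBm0, hm0] at hx
      have huk : 1 < t ^ 2 * bstar k + 1 := by nlinarith
      have hukpos : (0:ℝ) < t ^ 2 * bstar k + 1 := by linarith
      have hsk : 1 < Real.sqrt (t ^ 2 * bstar k + 1) * (t ^ 2 * bstar k + 1) := by
        nlinarith [Real.sq_sqrt hukpos.le, Real.sqrt_nonneg (t ^ 2 * bstar k + 1)]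
      have h2 : a k / (Real.sqrt (t ^ 2 * bstar k + 1) * (t ^ 2 * bstar k + 1)) < a k :=
        div_lt_self (ha k) hsk
      linarith
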